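/- Let ε ∈ {1,−1}, n ≥ 2, and let V be an n×n rational matrix such that det(V + εVᵀ) ≠ 0 and det V = 0. Then there exist an invertible n×n rational matrix P, a rational column vector q of length n−2, and an (n−2)×(n−2) rational matrix W such that, with respect to the decomposition n = 1+1+(n−2), PᵀVP = [[0,0,0],[−1,0,0],[0,q,W]] (the first row is zero; the second row is (−1,0,…,0); the remaining rows have first entry 0, second-column entries q, and remaining block W). Moreover, det(W + εWᵀ) ≠ 0. -/

import Mathlib

open Matrix Submodule Module LinearMap Set

/-- If `V` is a singular `n × n` rational matrix (`n ≥ 2`) with `det (V + εVᵀ) ≠ 0`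
(`ε = ±1`), then `V` is rationally congruent to a matrix of the block form
`[[0,0,0],[−1,0,0],[0,q,W]]` (blocks of sizes `1 + 1 + (n−2)`), where `W` again satisfies
`det (W + εWᵀ) ≠ 0`. -/
theorem singular_reduction (ε : ℚ) (hε : ε = 1 ∨ ε = -1) (n : ℕ) (hn : 2 ≤ n)
    (V : Matrix (Fin n) (Fin n) ℚ)
    (hdet : (V + ε • Vᵀ).det ≠ 0) (hV : V.det = 0) :
    ∃ (P : Matrix (Fin n) (Fin n) ℚ) (q : Fin (n - 2) → ℚ)
      (W : Matrix (Fin (n - 2)) (Fin (n - 2)) ℚ),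
      IsUnit P.det ∧
      Pᵀ * V * P =
        Matrix.reindex (finSumFinEquiv.trans (finCongr (by omega)))
          (finSumFinEquiv.trans (finCongr (by omega)))
          (Matrix.fromBlocks !![0, 0; -1, 0] 0
            (Matrix.of fun i (j : Fin 2) => if j = 0 then 0 else q i) W) ∧
      (W + ε • Wᵀ).det ≠ 0 := by
  obtain ⟨m, rfl⟩ : ∃ m, n = m + 2 := ⟨n - 2, by omega⟩
  obtain ⟨v, hv0, hvK⟩ : ∃ v, v ≠ 0 ∧ Vᵀ *ᵥ v = 0 := by
    have h : Vᵀ.det = 0 := by rw [det_transpose]; exact hV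
    obtain ⟨v, hv, h2⟩ := (Matrix.exists_mulVec_eq_zero_iff).2 h
    exact ⟨v, hv, h2⟩
  -- row-zero fact
  have hrow0 : ∀ x, v ⬝ᵥ (V *ᵥ x) = 0 := by
    intro x
    rw [dotProduct_mulVec, ← Matrix.mulVec_transpose, hvK, zero_dotProduct]
  have hw₁0 : V *ᵥ v ≠ 0 := by
    intro h
    apply hv0
    have h2 : (V + ε • Vᵀ) *ᵥ v = 0 := by
      rw [Matrix.add_mulVec, Matrix.smul_mulVec, hvK, h, smul_zero, add_zero]
    by_contra hv0'
    exact hdet (Matrix.exists_mulVec_eq_zero_iff.1 ⟨v, hv0', h2⟩)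
  set w₁ := V *ᵥ v with hw₁def
  obtain ⟨i, hi⟩ : ∃ i, w₁ i ≠ 0 := by
    by_contra h
    push_neg at h
    exact hw₁0 (funext h)
  set u : Fin (m+2) → ℚ := fun j => if j = i then -(w₁ i)⁻¹ else 0 with hudef
  have huw₁ : u ⬝ᵥ w₁ = -1 := by
    rw [hudef]
    simp only [dotProduct, ite_mul, zero_mul]
    rw [Finset.sum_ite_eq' Finset.univ i fun j => -(w₁ i)⁻¹ * w₁ j]
    simp [hi]
  set p₂ : Fin (m+2) → ℚ := u + (u ⬝ᵥ (V *ᵥ u)) • v with hp₂def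
  have hp₂w₁ : p₂ ⬝ᵥ w₁ = -1 := by
    rw [hp₂def, add_dotProduct, smul_dotProduct, huw₁]
    have : v ⬝ᵥ w₁ = 0 := hrow0 v
    rw [this, smul_eq_mul, mul_zero, add_zero]
  have hVp₂p₂ : p₂ ⬝ᵥ (V *ᵥ p₂) = 0 := by
    rw [hp₂def]
    rw [Matrix.mulVec_add, Matrix.mulVec_smul]
    rw [dotProduct_add, add_dotProduct, add_dotProduct, dotProduct_smul, dotProduct_smul,
      smul_dotProduct, smul_dotProduct]
    have h1 : v ⬝ᵥ (V *ᵥ u) = 0 := hrow0 u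
    have h2 : v ⬝ᵥ (V *ᵥ v) = 0 := hrow0 v
    have h3 : u ⬝ᵥ (V *ᵥ v) = -1 := huw₁
    rw [h1, h2, h3]
    simp [smul_eq_mul]
  set u₂ : Fin (m+2) → ℚ := Vᵀ *ᵥ p₂ with hu₂def
  have hvu₂ : v ⬝ᵥ u₂ = -1 := by
    rw [hu₂def, Matrix.mulVec_transpose, dotProduct_comm, ← dotProduct_mulVec, ← hw₁def, hp₂w₁]
  have hp₂u₂ : p₂ ⬝ᵥ u₂ = 0 := by
    rw [hu₂def, Matrix.mulVec_transpose, dotProduct_comm, ← dotProduct_mulVec, hVp₂p₂]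
  -- the two functionals
  set φ₁ : (Fin (m+2) → ℚ) →ₗ[ℚ] ℚ :=
    { toFun := fun x => x ⬝ᵥ w₁
      map_add' := fun x y => add_dotProduct x y w₁
      map_smul' := fun c x => smul_dotProduct c x w₁ } with hφ₁def
  set φ₂ : (Fin (m+2) → ℚ) →ₗ[ℚ] ℚ :=
    { toFun := fun x => x ⬝ᵥ u₂
      map_add' := fun x y => add_dotProduct x y u₂
      map_smul' := fun c x => smul_dotProduct c x u₂ } with hφ₂def
  set g := φ₁.prod φ₂ with hgdef
  have hgv : g v = (0, -1) := by
    rw [hgdef, LinearMap.prod_apply]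
    simp only [Function.prod, hφ₁def, hφ₂def, LinearMap.coe_mk, AddHom.coe_mk]
    rw [hrow0 v, hvu₂]
  have hgp₂ : g p₂ = (-1, 0) := by
    rw [hgdef, LinearMap.prod_apply]
    simp only [Function.prod, hφ₁def, hφ₂def, LinearMap.coe_mk, AddHom.coe_mk]
    rw [hp₂w₁, hp₂u₂]
  have hrange : LinearMap.range g = ⊤ := by
    rw [eq_top_iff]
    rintro ⟨x, y⟩ -
    have : ((x, y) : ℚ × ℚ) = (-x) • g p₂ + (-y) • g v := by
      rw [hgv, hgp₂, Prod.smul_mk, Prod.smul_mk, Prod.mk_add_mk]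
      simp [Prod.ext_iff]
    rw [this]
    exact add_mem (Submodule.smul_mem _ _ (LinearMap.mem_range_self g p₂))
      (Submodule.smul_mem _ _ (LinearMap.mem_range_self g v))
  have hK₂rank : finrank ℚ (LinearMap.ker g) = m := by
    have h1 := g.finrank_range_add_finrank_ker
    rw [hrange, finrank_top] at h1
    rw [Module.finrank_fintype_fun_eq_card, Fintype.card_fin] at h1
    have h2 : finrank ℚ (ℚ × ℚ) = 2 := by
      rw [Module.finrank_prod, finrank_self]
    rw [h2] at h1
    omega
  set c : Basis (Fin m) ℚ (LinearMap.ker g) := Module.finBasisOfFinrankEq ℚ _ hK₂rank with hcdef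
  have hcw₁ : ∀ k, (c k : Fin (m+2) → ℚ) ⬝ᵥ w₁ = 0 := by
    intro k
    have : g (c k : Fin (m+2) → ℚ) = 0 := (c k).2
    exact congrArg Prod.fst this
  have hcu₂ : ∀ k, (c k : Fin (m+2) → ℚ) ⬝ᵥ u₂ = 0 := by
    intro k
    have : g (c k : Fin (m+2) → ℚ) = 0 := (c k).2
    exact congrArg Prod.snd this
  -- the candidate basis family
  set cf : Fin m → (Fin (m+2) → ℚ) := fun k => (c k : Fin (m+2) → ℚ) with hcfdef
  set b' : Fin (m+2) → (Fin (m+2) → ℚ) := Fin.cons v (Fin.cons p₂ cf) with hb'def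
  have hcf_li : LinearIndependent ℚ cf := by
    have h := (c.linearIndependent).map' (LinearMap.ker g).subtype
      (Submodule.ker_subtype _)
    exact h
  have hspan₁ : p₂ ∉ Submodule.span ℚ (Set.range cf) := by
    intro hmem
    have hsub : Set.range cf ⊆ (LinearMap.ker φ₁ : Set (Fin (m+2) → ℚ)) := by
      rintro x ⟨k, rfl⟩
      exact hcw₁ k
    have := (Submodule.span_le.2 hsub) hmem
    have h0 : φ₁ p₂ = 0 := this
    have : p₂ ⬝ᵥ w₁ = 0 := h0
    rw [hp₂w₁] at this
    norm_num at this
  have hspan₂ : v ∉ Submodule.span ℚ (Set.range (Fin.cons p₂ cf : Fin (m+1) → _)) := by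
    intro hmem
    have hsub : Set.range (Fin.cons p₂ cf : Fin (m+1) → _) ⊆
        (LinearMap.ker φ₂ : Set (Fin (m+2) → ℚ)) := by
      rw [Fin.range_cons]
      rintro x (rfl | ⟨k, rfl⟩)
      · exact hp₂u₂
      · exact hcu₂ _
    have := (Submodule.span_le.2 hsub) hmem
    have h0 : φ₂ v = 0 := this
    have : v ⬝ᵥ u₂ = 0 := h0
    rw [hvu₂] at this
    norm_num at this
  have hli : LinearIndependent ℚ b' := by
    rw [hb'def, linearIndependent_fin_cons, linearIndependent_fin_cons]
    exact ⟨⟨hcf_li, hspan₁⟩, hspan₂⟩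
  set bB := basisOfLinearIndependentOfCardEqFinrank hli
    (by rw [Fintype.card_fin, Module.finrank_fintype_fun_eq_card, Fintype.card_fin]) with hbBdef
  have hbB : ⇑bB = b' := coe_basisOfLinearIndependentOfCardEqFinrank hli _
  -- the change-of-basis matrix
  set P : Matrix (Fin (m+2)) (Fin (m+2)) ℚ := Matrix.of fun i j => b' j i with hPdef
  have hPunit : IsUnit P.det := by
    have hPeq : P = (Pi.basisFun ℚ (Fin (m+2))).toMatrix ⇑bB := by
      ext i j
      rw [Basis.toMatrix_apply, Pi.basisFun_repr, hbB]
      rfl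
    rw [hPeq]
    have := (Pi.basisFun ℚ (Fin (m+2))).invertibleToMatrix bB
    exact Matrix.isUnit_det_of_invertible _
  -- entries of the congruent matrix
  have key : ∀ i j, (Pᵀ * V * P) i j = b' i ⬝ᵥ (V *ᵥ b' j) := by
    intro i j
    simp only [Matrix.mul_apply, Matrix.transpose_apply, hPdef, Matrix.of_apply, dotProduct,
      Matrix.mulVec, Finset.mul_sum, Finset.sum_mul]
    rw [Finset.sum_comm]
    exact Finset.sum_congr rfl fun k _ => Finset.sum_congr rfl fun l _ => by ring
  -- the data
  set q : Fin m → ℚ := fun k => cf k ⬝ᵥ (V *ᵥ p₂) with hqdef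
  set W : Matrix (Fin m) (Fin m) ℚ := Matrix.of fun k l => cf k ⬝ᵥ (V *ᵥ cf l) with hWdef
  set Cm : Matrix (Fin m) (Fin 2) ℚ := Matrix.of fun k (j : Fin 2) => if j = 0 then 0 else q k
    with hCmdef
  set A0 : Matrix (Fin 2) (Fin 2) ℚ := !![0, 0; -1, 0] with hA0def
  set N : Matrix (Fin 2 ⊕ Fin m) (Fin 2 ⊕ Fin m) ℚ := Matrix.fromBlocks A0 0 Cm W with hNdef
  set e : Fin 2 ⊕ Fin m ≃ Fin (m + 2) :=
    finSumFinEquiv.trans (finCongr (by omega : 2 + m = m + 2)) with hedef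
  -- index evaluation
  have he0 : e (Sum.inl 0) = (0 : Fin (m+2)) := by
    apply Fin.ext
    simp [hedef]
  have he1 : e (Sum.inl 1) = (1 : Fin (m+2)) := by
    apply Fin.ext
    simp [hedef]
  have he2 : ∀ k : Fin m, e (Sum.inr k) = (k.succ.succ : Fin (m+2)) := by
    intro k
    apply Fin.ext
    simp only [hedef, Equiv.trans_apply, finCongr_apply, Fin.coe_cast, finSumFinEquiv_apply_right,
      Fin.natAdd_mk, Fin.val_succ, Fin.coe_natAdd]
    omega
  have hb'0 : b' 0 = v := by rw [hb'def]; exact Fin.cons_zero _ _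
  have hone : (1 : Fin (m+2)) = Fin.succ 0 := by
    apply Fin.ext
    simp
  have hb'1 : b' 1 = p₂ := by
    rw [hb'def, hone, Fin.cons_succ]
    exact Fin.cons_zero _ _
  have hb'succ : ∀ k : Fin m, b' k.succ.succ = cf k := by
    intro k
    rw [hb'def, Fin.cons_succ, Fin.cons_succ]
  -- extra dot product facts
  have hp₂cf : ∀ k, p₂ ⬝ᵥ (V *ᵥ cf k) = 0 := by
    intro k
    rw [dotProduct_mulVec, ← Matrix.mulVec_transpose, ← hu₂def, dotProduct_comm]
    exact hcu₂ k
  have hcfv : ∀ k, cf k ⬝ᵥ (V *ᵥ v) = 0 := by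
    intro k
    rw [← hw₁def]
    exact hcw₁ k
  -- the congruence
  have hMain : Pᵀ * V * P = Matrix.reindex e e N := by
    refine ((Matrix.reindex e e).symm_apply_eq).1 ?_
    rw [Matrix.reindex_symm, Matrix.reindex_apply]
    ext ij kl
    rw [Matrix.submatrix_apply, Equiv.symm_symm, key]
    rcases ij with a | k
    · fin_cases a
      · rcases kl with b | l
        · fin_cases b
          · simp only [Fin.zero_eta, Fin.mk_one]
            rw [he0, hb'0, hrow0 v, hNdef]
            simp [hA0def]
          · simp only [Fin.zero_eta, Fin.mk_one]
            rw [he0, he1, hb'0, hb'1, hrow0 p₂, hNdef]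
            simp [hA0def]
        · simp only [Fin.zero_eta, Fin.mk_one]
          rw [he0, he2, hb'0, hb'succ, hrow0, hNdef]
          simp
      · rcases kl with b | l
        · fin_cases b
          · simp only [Fin.zero_eta, Fin.mk_one]
            rw [he1, he0, hb'1, hb'0, ← hw₁def, hp₂w₁, hNdef]
            simp [hA0def]
          · simp only [Fin.zero_eta, Fin.mk_one]
            rw [he1, hb'1, hVp₂p₂, hNdef]
            simp [hA0def]
        · simp only [Fin.zero_eta, Fin.mk_one]
          rw [he1, he2, hb'1, hb'succ, hp₂cf, hNdef]
          simp
    · rcases kl with b | l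
      · fin_cases b
        · simp only [Fin.zero_eta, Fin.mk_one]
          rw [he2, he0, hb'succ, hb'0, hcfv, hNdef]
          simp [hCmdef]
        · simp only [Fin.zero_eta, Fin.mk_one]
          rw [he2, he1, hb'succ, hb'1, hNdef]
          simp [hCmdef, hqdef]
      · rw [he2, he2, hb'succ, hb'succ, hNdef]
        simp [hWdef]
  refine ⟨P, q, W, hPunit, hMain, ?_⟩
  -- the determinant condition
  have hε2 : ε * ε = 1 := by rcases hε with rfl | rfl <;> norm_num
  have hsumM : Pᵀ * (V + ε • Vᵀ) * P = Matrix.reindex e e (N + ε • Nᵀ) := by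
    have h1 : Pᵀ * (V + ε • Vᵀ) * P = Pᵀ * V * P + ε • (Pᵀ * V * P)ᵀ := by
      rw [Matrix.mul_add, Matrix.add_mul]
      congr 1
      rw [Matrix.mul_smul, Matrix.smul_mul]
      congr 1
      simp [Matrix.transpose_mul, Matrix.mul_assoc]
    rw [h1, hMain, Matrix.transpose_reindex]
    ext a b
    simp [Matrix.reindex_apply, Matrix.submatrix_apply]
  have hPdet0 : P.det ≠ 0 := hPunit.ne_zero
  have hdet2 : (N + ε • Nᵀ).det ≠ 0 := by
    have h3 : (Pᵀ * (V + ε • Vᵀ) * P).det ≠ 0 := by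
      rw [Matrix.det_mul, Matrix.det_mul, Matrix.det_transpose]
      exact mul_ne_zero (mul_ne_zero hPdet0 hdet) hPdet0
    rw [hsumM, Matrix.det_reindex_self] at h3
    exact h3
  have hblocks : N + ε • Nᵀ =
      Matrix.fromBlocks (A0 + ε • A0ᵀ) (ε • Cmᵀ) Cm (W + ε • Wᵀ) := by
    rw [hNdef, Matrix.fromBlocks_transpose, Matrix.fromBlocks_smul, Matrix.fromBlocks_add]
    simp
  have ht : A0ᵀ = !![0, -1; 0, 0] := by
    rw [hA0def]
    ext a b
    fin_cases a <;> fin_cases b <;> rfl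
  have hA' : A0 + ε • A0ᵀ = !![0, -ε; -1, 0] := by
    rw [hA0def, ht]
    ext a b
    fin_cases a <;> fin_cases b <;> simp [Matrix.add_apply, Matrix.smul_apply]
  have hAB : !![0, -ε; -1, 0] * !![0, -1; -ε, 0] = 1 := by
    ext a b
    fin_cases a <;> fin_cases b <;>
      simp [Matrix.mul_apply, Fin.sum_univ_two, hε2]
  have hBA : !![0, -1; -ε, 0] * !![0, -ε; -1, 0] = 1 := by
    ext a b
    fin_cases a <;> fin_cases b <;>
      simp [Matrix.mul_apply, Fin.sum_univ_two, hε2]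
  haveI hInv : Invertible (!![0, -ε; -1, 0]) := ⟨!![0, -1; -ε, 0], hBA, hAB⟩
  have hinvOf : ⅟(!![0, -ε; -1, 0]) = !![0, -1; -ε, 0] := invOf_eq_right_inv hAB
  have hCzero : Cm * !![0, -1; -ε, 0] * (ε • Cmᵀ) = 0 := by
    ext k l
    simp [Matrix.mul_apply, Fin.sum_univ_two, hCmdef]
  intro h0
  apply hdet2
  rw [hblocks, hA', Matrix.det_fromBlocks₁₁, hinvOf, hCzero, sub_zero]
  exact mul_eq_zero_of_right _ h0
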